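/- (Corollary: geometric average of covariance functions.) Let d_1, …, d_n be positive integers with d = d_1 + ⋯ + d_n, and for each i let C_i : ℝ^{d_i} → (0,1] be a continuous even function such that γ_i(x) := −ln C_i(x) is conditionally negative definite on ℝ^{d_i}. Let θ_1, …, θ_n ≥ 0 with ∑_{i=1}^n θ_i = 1. Then the weighted geometric average C(x_1, …, x_n) = ∏_{i=1}^n C_i(x_i)^{θ_i} is positive definite on ℝ^d = ℝ^{d_1} × ⋯ × ℝ^{d_n}. -/

import Mathlib

/-- `C : V → ℝ` is a positive definite function on the additive group `V`. -/
def IsPosDefFn {V : Type*} [AddCommGroup V] (C : V → ℝ) : Prop :=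
  ∀ (m : ℕ) (z : Fin m → V) (c : Fin m → ℝ),
    0 ≤ ∑ k : Fin m, ∑ l : Fin m, c k * c l * C (z k - z l)

/-- `γ : V → ℝ` is conditionally negative definite (a variogram). -/
def IsCondNegDefFn {V : Type*} [AddCommGroup V] (γ : V → ℝ) : Prop :=
  ∀ (m : ℕ) (z : Fin m → V) (a : Fin m → ℝ), (∑ k, a k) = 0 →
    ∑ k : Fin m, ∑ l : Fin m, a k * a l * γ (z k - z l) ≤ 0

/-- Form-level positive semidefiniteness of a finite "matrix". -/
private def PSDf {m : ℕ} (M : Fin m → Fin m → ℝ) : Prop :=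
  ∀ c : Fin m → ℝ, 0 ≤ ∑ k : Fin m, ∑ l : Fin m, c k * c l * M k l

private lemma gram_of_psdf {m : ℕ} {M : Fin m → Fin m → ℝ}
    (hsym : ∀ k l, M k l = M l k) (h : PSDf M) :
    ∃ B : Fin m → Fin m → ℝ, ∀ k l, M k l = ∑ j, B j k * B j l := by
  have hps : (Matrix.of M).PosSemidef := by
    refine Matrix.PosSemidef.of_dotProduct_mulVec_nonneg ?_ ?_
    · ext k l
      simp [Matrix.conjTranspose_apply, hsym k l]
    · intro x
      have hx := h x
      simpa [dotProduct, Matrix.mulVec, Finset.mul_sum, mul_comm, mul_assoc,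
        mul_left_comm] using hx
  obtain ⟨B, hB⟩ : ∃ B : Matrix (Fin m) (Fin m) ℝ, Matrix.of M = B.conjTranspose * B := by
    open scoped MatrixOrder in
    exact ⟨CFC.sqrt (Matrix.of M), by
      have hnn : (0 : Matrix (Fin m) (Fin m) ℝ) ≤ Matrix.of M :=
        Matrix.nonneg_iff_posSemidef.mpr hps
      show _ = star (CFC.sqrt (Matrix.of M)) * _
      rw [(CFC.sqrt_nonneg (Matrix.of M)).isSelfAdjoint.star_eq, CFC.sqrt_mul_sqrt_self _ hnn]⟩
  refine ⟨fun j k => B j k, fun k l => ?_⟩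
  have := congrArg (fun A => A k l) hB
  simpa [Matrix.mul_apply, Matrix.conjTranspose_apply] using this

private lemma PSDf.schur {m : ℕ} {M N : Fin m → Fin m → ℝ}
    (hsym : ∀ k l, M k l = M l k) (hM : PSDf M) (hN : PSDf N) :
    PSDf (fun k l => M k l * N k l) := by
  obtain ⟨B, hB⟩ := gram_of_psdf hsym hM
  intro c
  have key : ∀ k l, c k * c l * (M k l * N k l)
      = ∑ j : Fin m, (c k * B j k) * (c l * B j l) * N k l := by
    intro k l
    rw [hB k l, Finset.sum_mul, Finset.mul_sum]
    exact Finset.sum_congr rfl fun j _ => by ring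
  simp only [key]
  have swap : ∑ k : Fin m, ∑ l : Fin m, ∑ j : Fin m,
        (c k * B j k) * (c l * B j l) * N k l
      = ∑ j : Fin m, ∑ k : Fin m, ∑ l : Fin m,
        (c k * B j k) * (c l * B j l) * N k l := by
    calc ∑ k : Fin m, ∑ l : Fin m, ∑ j : Fin m,
          (c k * B j k) * (c l * B j l) * N k l
        = ∑ k : Fin m, ∑ j : Fin m, ∑ l : Fin m,
          (c k * B j k) * (c l * B j l) * N k l :=
          Finset.sum_congr rfl fun k _ => Finset.sum_comm
      _ = ∑ j : Fin m, ∑ k : Fin m, ∑ l : Fin m,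
          (c k * B j k) * (c l * B j l) * N k l := Finset.sum_comm
  rw [swap]
  exact Finset.sum_nonneg fun j _ => hN (fun k => c k * B j k)

private lemma PSDf.pow {m : ℕ} {M : Fin m → Fin m → ℝ}
    (hsym : ∀ k l, M k l = M l k) (hM : PSDf M) (p : ℕ) :
    PSDf (fun k l => M k l ^ p) := by
  induction p with
  | zero =>
      intro c
      have h0 : ∑ k : Fin m, ∑ l : Fin m, c k * c l * M k l ^ 0
          = (∑ k : Fin m, c k) ^ 2 := by
        simp only [pow_zero, mul_one]
        rw [sq, Finset.sum_mul_sum]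
      rw [h0]; positivity
  | succ p ih =>
      have hs := PSDf.schur (M := fun k l => M k l ^ p) (N := M)
        (fun k l => by simp [hsym k l]) ih hM
      intro c
      have h := hs c
      simpa [pow_succ] using h

private lemma PSDf.exp {m : ℕ} {M : Fin m → Fin m → ℝ}
    (hsym : ∀ k l, M k l = M l k) (hM : PSDf M) :
    PSDf (fun k l => Real.exp (M k l)) := by
  intro c
  have hterm : ∀ k l : Fin m, HasSum (fun p : ℕ => c k * c l * (M k l ^ p / (p.factorial : ℝ)))
      (c k * c l * Real.exp (M k l)) := by
    intro k l
    have h : HasSum (fun p : ℕ => M k l ^ p / (p.factorial : ℝ)) (Real.exp (M k l)) := by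
      rw [Real.exp_eq_exp_ℝ]
      exact NormedSpace.expSeries_div_hasSum_exp (M k l)
    exact h.mul_left _
  have hsum : HasSum (fun p : ℕ => ∑ k : Fin m, ∑ l : Fin m, c k * c l * (M k l ^ p / (p.factorial : ℝ)))
      (∑ k : Fin m, ∑ l : Fin m, c k * c l * Real.exp (M k l)) :=
    hasSum_sum fun k _ => hasSum_sum fun l _ => hterm k l
  refine hasSum_le (f := fun _ : ℕ => (0 : ℝ)) (fun p => ?_) hasSum_zero hsum
  have hp := PSDf.pow hsym hM p c
  have hdiv : ∑ k : Fin m, ∑ l : Fin m, c k * c l * (M k l ^ p / (p.factorial : ℝ))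
      = (∑ k : Fin m, ∑ l : Fin m, c k * c l * M k l ^ p) / (p.factorial : ℝ) := by
    rw [Finset.sum_div]
    exact Finset.sum_congr rfl fun k _ => by
      rw [Finset.sum_div]
      exact Finset.sum_congr rfl fun l _ => by ring
  rw [hdiv]
  positivity

/-- Schoenberg's theorem, sufficiency direction: `exp (-γ)` is positive definite
whenever `γ` is even and conditionally negative definite. -/
private lemma expNeg_posDef {V : Type*} [AddCommGroup V] {γ : V → ℝ}
    (heven : ∀ x, γ (-x) = γ x) (hγ : IsCondNegDefFn γ) :
    IsPosDefFn (fun x => Real.exp (-γ x)) := by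
  intro m z c
  rcases Nat.eq_zero_or_pos m with hm | hm
  · subst hm; simp
  have i0 : Fin m := ⟨0, hm⟩
  have hγsym : ∀ x y : V, γ (x - y) = γ (y - x) := by
    intro x y
    rw [← heven (x - y)]; congr 1; abel
  set A : Fin m → Fin m → ℝ :=
    fun k l => γ (z k - z i0) + γ (z l - z i0) - γ (z k - z l) - γ 0 with hA
  have hAsym : ∀ k l, A k l = A l k := by
    intro k l; simp only [hA]; rw [hγsym (z k) (z l)]; ring
  have hApsd : PSDf A := by
    intro b
    set s : ℝ := ∑ k, b k with hs
    set ι : Fin m → ℝ := fun k => if k = i0 then (1 : ℝ) else 0 with hι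
    set a : Fin m → ℝ := fun k => b k - s * ι k with ha
    have hQι : ∀ f : Fin m → ℝ, (∑ k, ι k * f k) = f i0 := by
      intro f
      simp [hι, ite_mul]
    have hsum0 : (∑ k, a k) = 0 := by
      simp only [ha, Finset.sum_sub_distrib, ← Finset.mul_sum, ← hs]
      have : (∑ k, ι k * 1) = 1 := by rw [hQι]
      simp only [mul_one] at this
      rw [this]; ring
    have hcnd := hγ m z a hsum0
    set T : ℝ := ∑ k, b k * γ (z k - z i0) with hT
    -- the six elementary double sums
    have E1 : ∑ k : Fin m, ∑ l : Fin m, b k * γ (z k - z i0) * b l = T * s := by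
      have h1 : ∀ k : Fin m, ∑ l : Fin m, b k * γ (z k - z i0) * b l
          = b k * γ (z k - z i0) * s := by
        intro k; rw [← Finset.mul_sum, ← hs]
      simp only [h1]
      rw [← Finset.sum_mul, ← hT]
    have E2 : ∑ k : Fin m, ∑ l : Fin m, b k * (b l * γ (z l - z i0)) = s * T := by
      have h1 : ∀ k : Fin m, ∑ l : Fin m, b k * (b l * γ (z l - z i0)) = b k * T := by
        intro k; rw [← Finset.mul_sum, ← hT]
      simp only [h1]
      rw [← Finset.sum_mul, ← hs]
    have E3 : ∑ k : Fin m, ∑ l : Fin m, b k * b l * γ 0 = s * s * γ 0 := by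
      have h1 : ∀ k : Fin m, ∑ l : Fin m, b k * b l * γ 0 = b k * (s * γ 0) := by
        intro k
        simp only [mul_assoc]
        rw [← Finset.mul_sum, ← Finset.sum_mul, ← hs]
      simp only [h1]
      rw [← Finset.sum_mul, ← hs]; ring
    have E4 : ∑ k : Fin m, ∑ l : Fin m, ι k * (s * (b l * γ (z k - z l))) = s * T := by
      have h1 : ∀ k : Fin m, ∑ l : Fin m, ι k * (s * (b l * γ (z k - z l)))
          = ι k * (s * ∑ l : Fin m, b l * γ (z k - z l)) := by
        intro k; rw [← Finset.mul_sum, ← Finset.mul_sum]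
      simp only [h1]
      rw [hQι (fun k => s * ∑ l : Fin m, b l * γ (z k - z l))]
      congr 1
      rw [hT]
      exact Finset.sum_congr rfl fun l _ => by rw [hγsym (z i0) (z l)]
    have E5 : ∑ k : Fin m, ∑ l : Fin m, ι l * (s * (b k * γ (z k - z l))) = s * T := by
      have h1 : ∀ k : Fin m, ∑ l : Fin m, ι l * (s * (b k * γ (z k - z l)))
          = s * (b k * γ (z k - z i0)) :=
        fun k => hQι (fun l => s * (b k * γ (z k - z l)))
      simp only [h1]
      rw [← Finset.mul_sum, ← hT]
    have E6 : ∑ k : Fin m, ∑ l : Fin m, ι k * (ι l * (s * s * γ (z k - z l)))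
        = s * s * γ 0 := by
      have h1 : ∀ k : Fin m, ∑ l : Fin m, ι k * (ι l * (s * s * γ (z k - z l)))
          = ι k * (s * s * γ (z k - z i0)) := by
        intro k
        rw [← Finset.mul_sum, hQι (fun l => s * s * γ (z k - z l))]
      simp only [h1]
      rw [hQι (fun k => s * s * γ (z k - z i0))]
      rw [sub_self]
    have hsplit : ∀ k l, b k * b l * A k l + a k * a l * γ (z k - z l)
        = b k * γ (z k - z i0) * b l + b k * (b l * γ (z l - z i0))
          - b k * b l * γ 0
          - ι k * (s * (b l * γ (z k - z l)))
          - ι l * (s * (b k * γ (z k - z l)))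
          + ι k * (ι l * (s * s * γ (z k - z l))) := by
      intro k l; simp only [hA, ha]; ring
    have hS : (∑ k : Fin m, ∑ l : Fin m, b k * b l * A k l)
        + (∑ k : Fin m, ∑ l : Fin m, a k * a l * γ (z k - z l)) = 0 := by
      rw [← Finset.sum_add_distrib]
      simp only [← Finset.sum_add_distrib]
      simp only [hsplit]
      simp only [Finset.sum_add_distrib, Finset.sum_sub_distrib]
      rw [E1, E2, E3, E4, E5, E6]
      ring
    linarith
  -- the exponential trick
  have hfact : ∀ k l, c k * c l * Real.exp (-γ (z k - z l))
      = Real.exp (γ 0) *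
        ((c k * Real.exp (-γ (z k - z i0))) * (c l * Real.exp (-γ (z l - z i0)))
          * Real.exp (A k l)) := by
    intro k l
    have h : Real.exp (-γ (z k - z l))
        = Real.exp (γ 0) * (Real.exp (-γ (z k - z i0)) * Real.exp (-γ (z l - z i0))
            * Real.exp (A k l)) := by
      rw [← Real.exp_add, ← Real.exp_add, ← Real.exp_add]
      congr 1
      simp only [hA]; ring
    rw [h]; ring
  simp only [hfact, ← Finset.mul_sum]
  have h2 : 0 ≤ ∑ k : Fin m, ∑ l : Fin m,
      (c k * Real.exp (-γ (z k - z i0))) * (c l * Real.exp (-γ (z l - z i0)))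
        * Real.exp (A k l) :=
    PSDf.exp hAsym hApsd (fun k => c k * Real.exp (-γ (z k - z i0)))
  exact mul_nonneg (Real.exp_pos _).le h2

theorem geometricAverage_posDef
    (n : ℕ) (hn : 1 ≤ n) (d : Fin n → ℕ) (hd : ∀ i, 0 < d i)
    (C : ∀ i : Fin n, (Fin (d i) → ℝ) → ℝ)
    (hCcont : ∀ i, Continuous (C i))
    (hCrange : ∀ i x, C i x ∈ Set.Ioc (0 : ℝ) 1)
    (hCeven : ∀ i x, C i (-x) = C i x)
    (hCcnd : ∀ i, IsCondNegDefFn (fun x => -Real.log (C i x)))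
    (θ : Fin n → ℝ) (hθ : ∀ i, 0 ≤ θ i) (hθ1 : (∑ i, θ i) = 1) :
    IsPosDefFn (fun x : ∀ i : Fin n, Fin (d i) → ℝ =>
      ∏ i, C i (x i) ^ θ i) := by
  set γ : (∀ i : Fin n, Fin (d i) → ℝ) → ℝ :=
    fun x => ∑ i, θ i * (-Real.log (C i (x i))) with hγdef
  have heq : (fun x : ∀ i : Fin n, Fin (d i) → ℝ => ∏ i, C i (x i) ^ θ i)
      = fun x => Real.exp (-γ x) := by
    funext x
    have hpow : ∀ i : Fin n, C i (x i) ^ θ i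
        = Real.exp (θ i * Real.log (C i (x i))) := by
      intro i
      rw [Real.rpow_def_of_pos (hCrange i (x i)).1, mul_comm]
    rw [Finset.prod_congr rfl fun i _ => hpow i, ← Real.exp_sum]
    congr 1
    simp only [hγdef, mul_neg, ← Finset.sum_neg_distrib, neg_neg]
  rw [heq]
  apply expNeg_posDef
  · intro x
    simp only [hγdef]
    exact Finset.sum_congr rfl fun i _ => by
      rw [show (-x) i = -(x i) from rfl, hCeven]
  · intro m z a ha
    have swap : ∑ k : Fin m, ∑ l : Fin m, a k * a l * γ (z k - z l)
        = ∑ i : Fin n, θ i * ∑ k : Fin m, ∑ l : Fin m,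
            a k * a l * (-Real.log (C i (z k i - z l i))) := by
      have key : ∀ k l : Fin m, a k * a l * γ (z k - z l)
          = ∑ i : Fin n, θ i * (a k * a l * (-Real.log (C i (z k i - z l i)))) := by
        intro k l
        simp only [hγdef]
        rw [Finset.mul_sum]
        exact Finset.sum_congr rfl fun i _ => by
          rw [show (z k - z l) i = z k i - z l i from rfl]; ring
      simp only [key]
      have sw : ∑ k : Fin m, ∑ l : Fin m, ∑ i : Fin n,
            θ i * (a k * a l * (-Real.log (C i (z k i - z l i))))
          = ∑ i : Fin n, ∑ k : Fin m, ∑ l : Fin m,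
            θ i * (a k * a l * (-Real.log (C i (z k i - z l i)))) := by
        calc ∑ k : Fin m, ∑ l : Fin m, ∑ i : Fin n,
              θ i * (a k * a l * (-Real.log (C i (z k i - z l i))))
            = ∑ k : Fin m, ∑ i : Fin n, ∑ l : Fin m,
              θ i * (a k * a l * (-Real.log (C i (z k i - z l i)))) :=
              Finset.sum_congr rfl fun k _ => Finset.sum_comm
          _ = ∑ i : Fin n, ∑ k : Fin m, ∑ l : Fin m,
              θ i * (a k * a l * (-Real.log (C i (z k i - z l i)))) := Finset.sum_comm
      rw [sw]
      exact Finset.sum_congr rfl fun i _ => by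
        rw [Finset.mul_sum]
        exact Finset.sum_congr rfl fun k _ => by rw [Finset.mul_sum]
    rw [swap]
    refine Finset.sum_nonpos fun i _ => ?_
    have hi := hCcnd i m (fun k => z k i) a ha
    exact mul_nonpos_iff.mpr (Or.inl ⟨hθ i, hi⟩)
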